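/- For real β with β+1 > 0 and β − 2α + 1 > 0, and a > 0, the integral ∫_0^∞ K̃_α(a x) x^β dx equals 2^{β−1} a^{−β−1} Γ((β+1)/2) Γ((β−2α+1)/2), where K̃_α(x) = (x/2)^{−α} K_α(x) is the renormalized modified Bessel function of the second kind. -/

import Mathlib

open Real Set MeasureTheory Filter

/-- The modified Bessel function of the second kind,
`K_α(x) = ∫_0^∞ e^{−x cosh t} cosh(α t) dt`. -/
noncomputable def besselK (α x : ℝ) : ℝ :=
  ∫ t in Set.Ioi (0 : ℝ), Real.exp (-x * Real.cosh t) * Real.cosh (α * t)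

lemma auxIntOn (γ : ℝ) {y : ℝ} (hy : 0 < y) :
    IntegrableOn (fun t : ℝ => Real.exp (-(y * Real.cosh t)) * Real.exp (γ * t)) (Ioi 0) := by
  refine integrable_of_isBigO_exp_neg one_pos (Continuous.continuousOn (by fun_prop)) ?_
  rw [Asymptotics.isBigO_iff]
  refine ⟨1, ?_⟩
  have hM := (Real.tendsto_exp_div_pow_atTop 1).eventually_ge_atTop (max 0 (2 * (γ + 1) / y))
  filter_upwards [hM, Filter.eventually_gt_atTop (0:ℝ)] with t ht ht0
  have h1 : 2 * (γ + 1) / y ≤ Real.exp t / t ^ 1 := le_trans (le_max_right _ _) ht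
  rw [pow_one, le_div_iff₀ ht0] at h1
  have hch : Real.exp t / 2 ≤ Real.cosh t := by
    rw [Real.cosh_eq]; nlinarith [Real.exp_pos (-t)]
  have h2 : (γ + 1) * t ≤ y * Real.cosh t := by
    have : 2 * (γ + 1) / y * t ≤ Real.exp t := h1
    rw [div_mul_eq_mul_div, div_le_iff₀ hy] at this
    nlinarith
  rw [Real.norm_eq_abs, Real.norm_eq_abs, one_mul,
    abs_of_pos (by positivity), abs_of_pos (Real.exp_pos _), ← Real.exp_add]
  exact Real.exp_le_exp.2 (by linarith)

lemma auxInt (γ : ℝ) {y : ℝ} (hy : 0 < y) :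
    Integrable (fun t : ℝ => Real.exp (-(y * Real.cosh t)) * Real.exp (γ * t)) := by
  rw [← integrableOn_univ, ← Iic_union_Ioi (a := (0:ℝ))]
  refine IntegrableOn.union ?_ (auxIntOn γ hy)
  have A : MeasurableEmbedding fun x : ℝ => -x :=
    (Homeomorph.neg ℝ).isClosedEmbedding.measurableEmbedding
  have h := A.integrableOn_map_iff
    (f := fun t : ℝ => Real.exp (-(y * Real.cosh t)) * Real.exp (γ * t)) (s := Iic (0:ℝ))
    (μ := (volume : Measure ℝ))
  rw [Measure.map_neg_eq_self (volume : Measure ℝ)] at h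
  rw [h]
  have : ((fun x : ℝ => -x) ⁻¹' Iic 0) = Ici (0:ℝ) := by
    ext x; simp
  rw [this, integrableOn_Ici_iff_integrableOn_Ioi]
  refine (auxIntOn (-γ) hy).congr_fun (fun t ht => ?_) measurableSet_Ioi
  simp [Function.comp, Real.cosh_neg, neg_mul, mul_neg]

lemma besselK_line (α : ℝ) {y : ℝ} (hy : 0 < y) :
    (∫ t : ℝ, Real.exp (-(y * Real.cosh t)) * Real.exp (α * t)) = 2 * besselK α y := by
  set f : ℝ → ℝ := fun t => Real.exp (-(y * Real.cosh t)) * Real.exp (α * t) with hf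
  have hsplit := intervalIntegral.integral_Iic_add_Ioi (b := (0:ℝ))
    (auxInt α hy).integrableOn (auxInt α hy).integrableOn
  have hneg : (∫ t in Iic (0:ℝ), f t) = ∫ t in Ioi (0:ℝ), f (-t) := by
    have := integral_comp_neg_Iic (0:ℝ) (fun t => f (-t))
    simpa [neg_neg] using this
  rw [← hsplit, hneg, ← integral_add
    (((auxInt α hy).comp_neg).integrableOn) ((auxInt α hy).integrableOn)]
  rw [besselK, ← integral_const_mul]
  refine setIntegral_congr_fun measurableSet_Ioi (fun t _ => ?_)
  simp only [hf, Real.cosh_neg, mul_neg, neg_mul, neg_neg, Real.cosh_eq, Real.exp_neg, inv_inv]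
  ring

lemma image_exp_neg {y : ℝ} (hy : 0 < y) :
    (fun t : ℝ => y / 2 * Real.exp (-t)) '' univ = Ioi 0 := by
  rw [image_univ]
  ext s
  simp only [mem_range, mem_Ioi]
  constructor
  · rintro ⟨t, rfl⟩; positivity
  · intro hs
    refine ⟨Real.log (y / (2 * s)), ?_⟩
    rw [← Real.log_inv, Real.exp_log (by positivity)]
    field_simp

lemma hasDeriv_exp_neg (y t : ℝ) :
    HasDerivAt (fun t : ℝ => y / 2 * Real.exp (-t)) (-(y / 2 * Real.exp (-t))) t := by
  have h := ((Real.hasDerivAt_exp (-t)).comp t (hasDerivAt_neg t)).const_mul (y / 2)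
  simpa [mul_comm] using h

lemma inj_exp_neg {y : ℝ} (hy : 0 < y) :
    InjOn (fun t : ℝ => y / 2 * Real.exp (-t)) univ := by
  intro s _ t _ h
  simp only at h
  have h2 := mul_left_cancel₀ (by positivity : (y / 2 : ℝ) ≠ 0) h
  exact neg_injective (Real.exp_injective h2)

lemma cov_pointwise (α : ℝ) {y : ℝ} (hy : 0 < y) (t : ℝ) :
    |(-(y / 2 * Real.exp (-t)))| •
      (Real.exp (-(y / 2 * Real.exp (-t)) - y ^ 2 / (4 * (y / 2 * Real.exp (-t)))) *
        (y / 2 * Real.exp (-t)) ^ (-α - 1))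
    = (y / 2) ^ (-α) * (Real.exp (-(y * Real.cosh t)) * Real.exp (α * t)) := by
  have he : Real.exp t ≠ 0 := (Real.exp_pos _).ne'
  have h4 : y ^ 2 / (4 * (y / 2 * Real.exp (-t))) = y / 2 * Real.exp t := by
    rw [Real.exp_neg]; field_simp; ring
  have e2 : Real.exp (-(y / 2 * Real.exp (-t)) - y / 2 * Real.exp t)
      = Real.exp (-(y * Real.cosh t)) := by
    rw [Real.cosh_eq]; congr 1; ring
  have e1 : Real.exp (-t * (-α - 1)) = Real.exp (α * t) * Real.exp t := by
    rw [← Real.exp_add]; congr 1; ring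
  have e3 : (y / 2 : ℝ) ^ (-α) = (y / 2) ^ (-α - 1) * (y / 2) := by
    rw [← Real.rpow_add_one (by positivity : (y / 2 : ℝ) ≠ 0)]; norm_num
  rw [abs_neg, abs_of_pos (by positivity), smul_eq_mul, h4, e2,
    Real.mul_rpow (by positivity) (by positivity), ← Real.exp_mul, e1, e3, Real.exp_neg]
  field_simp

lemma besselK_rep (α : ℝ) {y : ℝ} (hy : 0 < y) :
    (y / 2) ^ (-α) * besselK α y
      = (1 / 2) * ∫ s in Ioi (0 : ℝ), Real.exp (-s - y ^ 2 / (4 * s)) * s ^ (-α - 1) := by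
  have hkey : (∫ s in Ioi (0 : ℝ), Real.exp (-s - y ^ 2 / (4 * s)) * s ^ (-α - 1))
      = ∫ t : ℝ, (y / 2) ^ (-α) * (Real.exp (-(y * Real.cosh t)) * Real.exp (α * t)) := by
    rw [← image_exp_neg hy,
      integral_image_eq_integral_abs_deriv_smul MeasurableSet.univ
        (fun t _ => (hasDeriv_exp_neg y t).hasDerivWithinAt) (inj_exp_neg hy)]
    rw [setIntegral_univ]
    congr 1
    funext t
    exact cov_pointwise α hy t
  rw [hkey, integral_const_mul, besselK_line α hy]
  ring

lemma besselK_rep_integrable (α : ℝ) {y : ℝ} (hy : 0 < y) :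
    IntegrableOn (fun s => Real.exp (-s - y ^ 2 / (4 * s)) * s ^ (-α - 1)) (Ioi (0 : ℝ)) := by
  rw [← image_exp_neg hy,
    integrableOn_image_iff_integrableOn_abs_deriv_smul MeasurableSet.univ
      (fun t _ => (hasDeriv_exp_neg y t).hasDerivWithinAt) (inj_exp_neg hy)]
  rw [integrableOn_univ]
  refine ((auxInt α hy).const_mul ((y / 2) ^ (-α))).congr ?_
  exact ae_of_all _ fun t => (cov_pointwise α hy t).symm

set_option maxHeartbeats 1000000 in
/-- For `β+1 > 0`, `β − 2α + 1 > 0` and `a > 0`,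
`∫_0^∞ K̃_α(a x) x^β dx = 2^{β−1} a^{−β−1} Γ((β+1)/2) Γ((β−2α+1)/2)`,
where `K̃_α(x) = (x/2)^{−α} K_α(x)`. -/
theorem stmt_2 (α β a : ℝ) (h1 : 0 < β + 1) (h2 : 0 < β - 2 * α + 1) (ha : 0 < a) :
    ∫ x in Set.Ioi (0 : ℝ), ((a * x / 2) ^ (-α) * besselK α (a * x)) * x ^ β
      = 2 ^ (β - 1) * a ^ (-(β + 1)) * Real.Gamma ((β + 1) / 2)
        * Real.Gamma ((β - 2 * α + 1) / 2) := by
  have h2' : 0 < (β - 2 * α + 1) / 2 := by linarith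
  have hβ : (-1 : ℝ) < β := by linarith
  set Γ1 := Real.Gamma ((β + 1) / 2) with hΓ1
  set F : ℝ → ℝ → ℝ := fun s x =>
    Real.exp (-s) * s ^ (-α - 1) * (x ^ β * Real.exp (-(a ^ 2 / (4 * s)) * x ^ (2 : ℝ))) with hF
  have hFg : ∀ s ∈ Ioi (0 : ℝ), ∀ x ∈ Ioi (0 : ℝ),
      Real.exp (-s - (a * x) ^ 2 / (4 * s)) * s ^ (-α - 1) * x ^ β = F s x := by
    intro s hs x hx
    have hx2 : (x : ℝ) ^ (2 : ℝ) = x ^ 2 := by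
      rw [show (2 : ℝ) = ((2 : ℕ) : ℝ) by norm_num, Real.rpow_natCast]
    rw [hF]; dsimp only
    rw [hx2, show -(a ^ 2 / (4 * s)) * x ^ 2 = -((a * x) ^ 2 / (4 * s)) by ring,
      show -s - (a * x) ^ 2 / (4 * s) = -s + -((a * x) ^ 2 / (4 * s)) by ring, Real.exp_add]
    ring
  -- measurability
  have hmeas : AEStronglyMeasurable (Function.uncurry F)
      ((volume.restrict (Ioi 0)).prod (volume.restrict (Ioi 0))) := by
    apply Measurable.aestronglyMeasurable
    simp only [Function.uncurry_def, hF]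
    fun_prop
  -- inner integral value
  have hval : ∀ s ∈ Ioi (0 : ℝ), (∫ x in Ioi (0 : ℝ), F s x)
      = (a ^ 2 / 4) ^ (-(β + 1) / 2) * ((1 / 2) * Γ1)
        * (Real.exp (-s) * s ^ ((β - 2 * α + 1) / 2 - 1)) := by
    intro s hs
    have hs0 : (0 : ℝ) < s := hs
    have hb : 0 < a ^ 2 / (4 * s) := by positivity
    rw [hF]; dsimp only
    rw [integral_const_mul, integral_rpow_mul_exp_neg_mul_rpow two_pos hβ hb]
    have key1 : (a ^ 2 / (4 * s)) ^ (-(β + 1) / 2)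
        = (a ^ 2 / 4) ^ (-(β + 1) / 2) * s ^ ((β + 1) / 2) := by
      rw [show a ^ 2 / (4 * s) = (a ^ 2 / 4) / s by ring,
        Real.div_rpow (by positivity) hs0.le, div_eq_mul_inv,
        ← Real.rpow_neg hs0.le, neg_div, neg_neg]
    have key2 : s ^ (-α - 1) * s ^ ((β + 1) / 2) = s ^ ((β - 2 * α + 1) / 2 - 1) := by
      rw [← Real.rpow_add hs0]; congr 1; ring
    rw [key1, ← key2, hΓ1]
    ring
  -- product integrability
  have hprod : Integrable (Function.uncurry F)
      ((volume.restrict (Ioi 0)).prod (volume.restrict (Ioi 0))) := by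
    rw [integrable_prod_iff hmeas]
    constructor
    · filter_upwards [ae_restrict_mem measurableSet_Ioi] with s hs
      have hb : 0 < a ^ 2 / (4 * s) := by
        have hs0 : (0 : ℝ) < s := hs
        positivity
      simp only [Function.uncurry_apply_pair]
      exact (integrableOn_rpow_mul_exp_neg_mul_rpow hβ two_pos hb).const_mul _
    · refine ((Real.GammaIntegral_convergent h2').const_mul
        ((a ^ 2 / 4) ^ (-(β + 1) / 2) * ((1 / 2) * Γ1))).congr ?_
      filter_upwards [ae_restrict_mem measurableSet_Ioi] with s hs
      simp only [Function.uncurry_apply_pair]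
      have hs0 : (0 : ℝ) < s := hs
      have hnorm : (∫ x in Ioi (0 : ℝ), ‖F s x‖) = ∫ x in Ioi (0 : ℝ), F s x := by
        refine setIntegral_congr_fun measurableSet_Ioi (fun x hx => ?_)
        have hx0 : (0 : ℝ) < x := hx
        refine norm_of_nonneg ?_
        rw [hF]; dsimp only; positivity
      rw [hnorm, hval s hs]
  -- the computation
  have hswap := integral_integral_swap hprod
  have hinner : (∫ s in Ioi (0 : ℝ), ∫ x in Ioi (0 : ℝ), F s x)
      = (a ^ 2 / 4) ^ (-(β + 1) / 2) * ((1 / 2) * Γ1)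
        * Real.Gamma ((β - 2 * α + 1) / 2) := by
    rw [setIntegral_congr_fun measurableSet_Ioi hval, integral_const_mul,
      ← Real.Gamma_eq_integral h2']
  have hc : (a ^ 2 / 4 : ℝ) ^ (-(β + 1) / 2) = 2 ^ (β + 1) * a ^ (-(β + 1)) := by
    have key : ∀ x : ℝ, 0 < x → ((x ^ (2 : ℕ) : ℝ)) ^ (-(β + 1) / 2) = x ^ (-(β + 1)) := by
      intro x hx
      rw [← Real.rpow_natCast x 2, ← Real.rpow_mul hx.le]
      congr 1
      push_cast
      ring
    rw [Real.div_rpow (by positivity) (by norm_num : (0 : ℝ) ≤ 4),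
      show (4 : ℝ) = (2 : ℝ) ^ (2 : ℕ) by norm_num, key 2 two_pos, key a ha,
      Real.rpow_neg (by norm_num : (0 : ℝ) ≤ 2), div_eq_mul_inv, inv_inv]
    ring
  calc ∫ x in Set.Ioi (0 : ℝ), ((a * x / 2) ^ (-α) * besselK α (a * x)) * x ^ β
      = ∫ x in Ioi (0 : ℝ), (1 / 2) * ∫ s in Ioi (0 : ℝ), F s x := by
        refine setIntegral_congr_fun measurableSet_Ioi (fun x hx => ?_)
        have hax : 0 < a * x := mul_pos ha hx
        rw [besselK_rep α hax, mul_assoc, ← integral_mul_const]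
        congr 1
        exact setIntegral_congr_fun measurableSet_Ioi (fun s hs => hFg s hs x hx)
    _ = (1 / 2) * ∫ x in Ioi (0 : ℝ), ∫ s in Ioi (0 : ℝ), F s x := integral_const_mul _ _
    _ = (1 / 2) * ∫ s in Ioi (0 : ℝ), ∫ x in Ioi (0 : ℝ), F s x := by rw [← hswap]
    _ = (1 / 2) * ((a ^ 2 / 4) ^ (-(β + 1) / 2) * ((1 / 2) * Γ1)
          * Real.Gamma ((β - 2 * α + 1) / 2)) := by rw [hinner]
    _ = 2 ^ (β - 1) * a ^ (-(β + 1)) * Γ1 * Real.Gamma ((β - 2 * α + 1) / 2) := by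
        have h22 : (2 : ℝ) ^ (2 : ℝ) = 4 := by
          rw [show (2 : ℝ) ^ (2 : ℝ) = (2 : ℝ) ^ ((2 : ℕ) : ℝ) by norm_num,
            Real.rpow_natCast]
          norm_num
        have h24 : (2 : ℝ) ^ (β + 1) = 4 * 2 ^ (β - 1) := by
          rw [show (β + 1 : ℝ) = (β - 1) + 2 by ring, Real.rpow_add two_pos, h22]
          ring
        rw [hc, h24]
        ring
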